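/- Let a countable group Λ act on the right by measure-preserving transformations on a nonzero σ-finite measure space (Σ, σ), let G be a locally compact second countable topological group with its Borel σ-algebra, and let F : Σ × Σ → G be a measurable map satisfying: (C_inv) for every λ ∈ Λ, F(xλ, yλ) = F(x, y) for σ×σ-almost every (x, y); and (C_cncl) for every λ ∈ Λ, F(xλ, y) F(x, y)⁻¹ = F(xλ, z) F(x, z)⁻¹ for σ×σ×σ-almost every (x, y, z). Then for σ-almost every x ∈ Σ there is a group homomorphism ρ_x : Λ → G such that for every λ ∈ Λ one has ρ_x(λ) = F(xλ, y) F(x, y)⁻¹ for σ-almost every y ∈ Σ. -/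

import Mathlib

open MeasureTheory Filter Topology

/-- Lemma 5.2, first part.  Let a countable group `Λ` act on the right by
measure-preserving transformations on a nonzero σ-finite measure space `(Σ, σ)`, let `G` be a
locally compact second countable topological group with its Borel σ-algebra, and let
`F : Σ × Σ → G` be measurable, satisfying `(C_inv)` and `(C_cncl)`.  Then for σ-a.e. `x`
there is a homomorphism `ρ_x : Λ → G` with `ρ_x(λ) = F(xλ, y) F(x, y)⁻¹` for σ-a.e. `y`. -/
theorem ae_homomorphism {S Λ : Type} [Group Λ] [Countable Λ]
    [MeasurableSpace S] (σ : Measure S) [SigmaFinite σ] (hσ : σ ≠ 0)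
    (r : Λ → S → S)
    (r_one : ∀ s, r 1 s = s) (r_mul : ∀ l₁ l₂ s, r (l₁ * l₂) s = r l₂ (r l₁ s))
    (r_mp : ∀ lam, MeasurePreserving (r lam) σ σ)
    {G : Type} [Group G] [TopologicalSpace G] [IsTopologicalGroup G]
    [LocallyCompactSpace G] [SecondCountableTopology G]
    [MeasurableSpace G] [BorelSpace G]
    (F : S × S → G) (hF : Measurable F)
    (hinv : ∀ lam : Λ, ∀ᵐ p ∂σ.prod σ, F (r lam p.1, r lam p.2) = F p)
    (hcncl : ∀ lam : Λ, ∀ᵐ q ∂σ.prod (σ.prod σ),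
      F (r lam q.1, q.2.1) * (F (q.1, q.2.1))⁻¹ =
        F (r lam q.1, q.2.2) * (F (q.1, q.2.2))⁻¹) :
    ∀ᵐ x ∂σ, ∃ ρx : Λ →* G, ∀ lam : Λ, ∀ᵐ y ∂σ,
      ρx lam = F (r lam x, y) * (F (x, y))⁻¹ := by
  classical
  have hne : (ae σ).NeBot := ae_neBot.mpr hσ
  -- the a.e.-constant value of `y ↦ F(xλ, y) F(x, y)⁻¹`, when it exists
  set c : S → Λ → G := fun x lam =>
    if h : ∃ g, ∀ᵐ y ∂σ, F (r lam x, y) * (F (x, y))⁻¹ = g then h.choose else 1 with hc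
  have hspec : ∀ x lam, (∃ g, ∀ᵐ y ∂σ, F (r lam x, y) * (F (x, y))⁻¹ = g) →
      ∀ᵐ y ∂σ, F (r lam x, y) * (F (x, y))⁻¹ = c x lam := by
    intro x lam h
    have := h.choose_spec
    simpa [hc, dif_pos h] using this
  -- transport of a.e. statements along the measure-preserving maps `r lam`
  have htrans : ∀ (lam : Λ) (p : S → Prop), (∀ᵐ x ∂σ, p x) → ∀ᵐ x ∂σ, p (r lam x) :=
    fun lam p h => (r_mp lam).quasiMeasurePreserving.tendsto_ae.eventually h
  -- a.e. existence of the constant, from (C_cncl)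
  have hex : ∀ lam : Λ, ∀ᵐ x ∂σ, ∃ g, ∀ᵐ y ∂σ, F (r lam x, y) * (F (x, y))⁻¹ = g := by
    intro lam
    filter_upwards [Measure.ae_ae_of_ae_prod (hcncl lam)] with x hx
    have hx' : ∀ᵐ y ∂σ, ∀ᵐ z ∂σ,
        F (r lam x, y) * (F (x, y))⁻¹ = F (r lam x, z) * (F (x, z))⁻¹ :=
      Measure.ae_ae_of_ae_prod hx
    obtain ⟨y₀, hy₀⟩ := hx'.exists
    exact ⟨F (r lam x, y₀) * (F (x, y₀))⁻¹, hy₀.mono fun z hz => hz.symm⟩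
  have hgood : ∀ lam : Λ, ∀ᵐ x ∂σ,
      ∀ᵐ y ∂σ, F (r lam x, y) * (F (x, y))⁻¹ = c x lam :=
    fun lam => (hex lam).mono fun x hx => hspec x lam hx
  have hgoodT : ∀ lam mu : Λ, ∀ᵐ x ∂σ,
      ∀ᵐ y ∂σ, F (r mu (r lam x), y) * (F (r lam x, y))⁻¹ = c (r lam x) mu :=
    fun lam mu => htrans lam _ (hgood mu)
  -- cocycle identity: c x (λμ) = c (xλ) μ * c x λ
  have key1 : ∀ lam mu : Λ, ∀ᵐ x ∂σ, c x (lam * mu) = c (r lam x) mu * c x lam := by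
    intro lam mu
    filter_upwards [hgood (lam * mu), hgood lam, hgoodT lam mu] with x h1 h2 h3
    obtain ⟨y, hy1, hy2, hy3⟩ := (h1.and (h2.and h3)).exists
    rw [← hy1, ← hy2, ← hy3, r_mul]
    group
  -- invariance: c (xλ) μ = c x (λμλ⁻¹)
  have key2 : ∀ lam mu : Λ, ∀ᵐ x ∂σ, c (r lam x) mu = c x (lam * mu * lam⁻¹) := by
    intro lam mu
    set nu := lam * mu * lam⁻¹ with hnu
    have hmp : MeasurePreserving (Prod.map (r nu) (id : S → S)) (σ.prod σ) (σ.prod σ) :=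
      (r_mp nu).prod (MeasurePreserving.id σ)
    have hA1 : ∀ᵐ p ∂σ.prod σ, F (r lam (r nu p.1), r lam p.2) = F (r nu p.1, p.2) := by
      have := hmp.quasiMeasurePreserving.tendsto_ae.eventually (hinv lam)
      simpa [Prod.map] using this
    have hA1' := Measure.ae_ae_of_ae_prod hA1
    have hA2' := Measure.ae_ae_of_ae_prod (hinv lam)
    have hA3 : ∀ᵐ x ∂σ, ∀ᵐ y ∂σ,
        F (r mu (r lam x), r lam y) * (F (r lam x, r lam y))⁻¹ = c (r lam x) mu :=
      (hgoodT lam mu).mono fun x hx => htrans lam _ hx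
    filter_upwards [hA1', hA2', hA3, hgood nu] with x h1 h2 h3 h4
    obtain ⟨y, hy1, hy2, hy3, hy4⟩ := (h1.and (h2.and (h3.and h4))).exists
    have hrr : r lam (r nu x) = r mu (r lam x) := by
      rw [← r_mul, ← r_mul, hnu]
      congr 1
      group
    rw [hrr] at hy1
    rw [← hy3, ← hy4, hy1, hy2]
  -- combine countably many a.e. statements
  have hall : ∀ᵐ x ∂σ,
      (∀ lam : Λ, ∀ᵐ y ∂σ, F (r lam x, y) * (F (x, y))⁻¹ = c x lam) ∧
      ∀ p : Λ × Λ, c x (p.1 * p.2) = c x (p.1 * p.2 * p.1⁻¹) * c x p.1 := by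
    rw [eventually_and]
    constructor
    · exact (ae_all_iff).mpr hgood
    · rw [ae_all_iff]
      rintro ⟨lam, mu⟩
      filter_upwards [key1 lam mu, key2 lam mu] with x h1 h2
      rw [h1, h2]
  filter_upwards [hall] with x hx
  obtain ⟨h1, h2⟩ := hx
  have hmul : ∀ a b : Λ, c x (a * b) = c x a * c x b := by
    intro a b
    have := h2 (b, b⁻¹ * a * b)
    simp only at this
    rwa [show b * (b⁻¹ * a * b) * b⁻¹ = a by group,
      show b * (b⁻¹ * a * b) = a * b by group] at this
  exact ⟨MonoidHom.mk' (c x) hmul, fun lam => (h1 lam).mono fun y hy => hy.symm⟩
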